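/- With D_j(a,b) as the Hankel minor defined by deleting column j from the Hankel matrix on μ(a),...,μ(2b-a-1), Cigler's conjecture is equivalent to: det(D_j(0,i+m))_{i,j=0}^{n-1} = D_{m+n}(n,m+n) · ∏_{i=1}^{n-1} D_{m+i}(0,m+i), for all m,n ≥ 1. -/

import Mathlib

/-- `Dm μ a b j` : determinant of the `(b-a)×(b-a)` Hankel-type matrix on
`μ a, …, μ b` with the column containing `μ j` (in the top row) deleted;
`0` if `j < a` or `j > b`. -/
def Dm {R : Type*} [CommRing R] (μ : ℕ → R) (a b j : ℕ) : R :=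
  if a ≤ j ∧ j ≤ b then
    Matrix.det (Matrix.of fun r c : Fin (b - a) =>
      μ (a + (r : ℕ) + (if (c : ℕ) < j - a then (c : ℕ) else (c : ℕ) + 1)))
  else 0

namespace CiglerAux

open Matrix Finset
open Fin.NatCast

variable {R : Type*} [CommRing R]

lemma succAbove_val {b : ℕ} (j : Fin (b+1)) (c : Fin b) :
    ((j.succAbove c) : ℕ) = if (c : ℕ) < (j : ℕ) then (c : ℕ) else (c : ℕ) + 1 := by
  rcases lt_or_ge ((c : ℕ)) (j : ℕ) with h | h
  · rw [Fin.succAbove_of_castSucc_lt _ _ (by simpa [Fin.lt_def] using h)]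
    simp [h]
  · rw [Fin.succAbove_of_le_castSucc _ _ (by simpa [Fin.le_def] using h)]
    simp [Nat.not_lt.mpr h]

lemma Dm_zero_of_gt (μ : ℕ → R) (a b j : ℕ) (h : b < j) : Dm μ a b j = 0 := by
  unfold Dm; rw [if_neg]; omega

lemma Dm_hankel (μ : ℕ → R) (N : ℕ) :
    Dm μ 0 N N = Matrix.det (Matrix.of fun r c : Fin N => μ ((r : ℕ) + (c : ℕ))) := by
  unfold Dm
  rw [if_pos ⟨Nat.zero_le _, le_refl _⟩]
  congr 1
  ext r c
  have hc : (c : ℕ) < N := c.isLt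
  simp only [Matrix.of_apply, Nat.sub_zero, Nat.zero_add, hc, if_true]

/-- cofactor expansion: the row of signed minors paired with the moment row `t`. -/
lemma cofactor (μ : ℕ → R) (b t : ℕ) :
    ∑ c ∈ Finset.range (b+1), (-1:R)^(b+c) * Dm μ 0 b c * μ (c + t)
      = Matrix.det (Matrix.of fun i c : Fin (b+1) =>
          if (i : ℕ) < b then μ ((i : ℕ) + c) else μ ((c : ℕ) + t)) := by
  rw [Matrix.det_succ_row _ (Fin.last b), ← Fin.sum_univ_eq_sum_range]
  refine Finset.sum_congr rfl fun j _ => ?_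
  have h2 : (Matrix.of fun i c : Fin (b+1) =>
      if (i : ℕ) < b then μ ((i : ℕ) + c) else μ ((c : ℕ) + t)) (Fin.last b) j
        = μ ((j : ℕ) + t) := by
    simp [Matrix.of_apply]
  have h3 : Dm μ 0 b (j : ℕ) =
      Matrix.det ((Matrix.of fun i c : Fin (b+1) =>
        if (i : ℕ) < b then μ ((i : ℕ) + c) else μ ((c : ℕ) + t)).submatrix
        (Fin.last b).succAbove j.succAbove) := by
    unfold Dm
    rw [if_pos ⟨Nat.zero_le _, Fin.is_le j⟩]
    congr 1
    ext r c
    have hr : (r : ℕ) < b := by simpa using r.isLt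
    simp only [Matrix.submatrix_apply, Matrix.of_apply, Fin.succAbove_last, succAbove_val,
      Nat.sub_zero, Nat.zero_add, Fin.coe_castSucc, hr, if_true]
  rw [h2, ← h3, Fin.val_last]
  ring

lemma cofactor_lt (μ : ℕ → R) (b t : ℕ) (ht : t < b) :
    ∑ c ∈ Finset.range (b+1), (-1:R)^(b+c) * Dm μ 0 b c * μ (c + t) = 0 := by
  rw [cofactor]
  apply Matrix.det_zero_of_row_eq (i := (⟨t, by omega⟩ : Fin (b+1))) (j := Fin.last b)
  · simp only [ne_eq, Fin.ext_iff, Fin.val_last]; omega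
  · funext c
    simp only [Matrix.of_apply, Fin.val_last, lt_irrefl, if_false]
    rw [if_pos ht, Nat.add_comm]

lemma cofactor_eq (μ : ℕ → R) (b : ℕ) :
    ∑ c ∈ Finset.range (b+1), (-1:R)^(b+c) * Dm μ 0 b c * μ (c + b)
      = Dm μ 0 (b+1) (b+1) := by
  rw [cofactor]
  unfold Dm
  rw [if_pos ⟨Nat.zero_le _, le_refl _⟩]
  congr 1
  ext r c
  have hc : (c : ℕ) < b + 1 := c.isLt
  simp only [Matrix.of_apply, Nat.sub_zero, Nat.zero_add, hc, if_true]
  rcases Nat.lt_or_ge (r : ℕ) b with h | h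
  · rw [if_pos h]
  · have hrb : (r : ℕ) = b := by have := r.isLt; omega
    rw [if_neg (by omega), hrb, Nat.add_comm]

lemma finRotate_pow_apply (N k : ℕ) [NeZero N] (x : Fin N) :
    ((finRotate N)^k) x = x + (k : Fin N) := by
  rcases N with _ | M
  · exact absurd rfl (NeZero.ne 0)
  · induction k with
    | zero => simp
    | succ k ih =>
      rw [pow_succ', Equiv.Perm.mul_apply, finRotate_succ_apply, ih]
      push_cast
      rw [add_assoc]

lemma Dm_map {S : Type*} [CommRing S] (φ : R →+* S) (μ : ℕ → R) (a b j : ℕ) :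
    φ (Dm μ a b j) = Dm (fun k => φ (μ k)) a b j := by
  unfold Dm
  split_ifs with h
  · rw [RingHom.map_det]
    congr 1
  · exact map_zero φ

/-- The key identity, valid over any commutative ring:
`det (D_j(0,i+m)) · H_{m+n} = D_{m+n}(n,m+n) · ∏_{i=1}^{n} H_{m+i}`. -/
lemma key (μ : ℕ → R) (m n : ℕ) (hm : 1 ≤ m) (hn : 1 ≤ n) :
    Matrix.det (Matrix.of fun i j : Fin n => Dm μ 0 ((i : ℕ) + m) (j : ℕ))
        * Dm μ 0 (m + n) (m + n)
      = Dm μ n (m + n) (m + n) * ∏ i ∈ Finset.Icc 1 n, Dm μ 0 (m + i) (m + i) := by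
  classical
  have hNe : NeZero (m + n) := ⟨by omega⟩
  set L : Matrix (Fin n) (Fin n) R :=
    Matrix.of fun i j : Fin n => Dm μ 0 ((i : ℕ) + m) (j : ℕ) with hL
  set Uf : Matrix (Fin (m+n)) (Fin (m+n)) R := Matrix.of fun r c =>
    if (r : ℕ) < m then (if (c : ℕ) = n + r then (1:R) else 0)
    else (-1:R)^((r : ℕ)+(c : ℕ)) * Dm μ 0 r c with hUf
  set Hf : Matrix (Fin (m+n)) (Fin (m+n)) R := Matrix.of fun r c => μ ((r : ℕ) + (c : ℕ))
    with hHf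
  set σe : (Fin m ⊕ Fin n) ≃ Fin (m+n) := finSumFinEquiv with hσe
  set βe : (Fin m ⊕ Fin n) ≃ Fin (m+n) :=
    (Equiv.sumComm (Fin m) (Fin n)).trans
      ((finSumFinEquiv : Fin n ⊕ Fin m ≃ Fin (n+m)).trans (finCongr (Nat.add_comm n m)))
    with hβe
  have hσl : ∀ i : Fin m, ((σe (Sum.inl i)) : ℕ) = (i : ℕ) := fun i => by
    simp [hσe]
  have hσr : ∀ i : Fin n, ((σe (Sum.inr i)) : ℕ) = m + (i : ℕ) := fun i => by
    simp [hσe]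
  have hβl : ∀ i : Fin m, ((βe (Sum.inl i)) : ℕ) = n + (i : ℕ) := fun i => by
    simp [hβe, Nat.add_comm]
  have hβr : ∀ i : Fin n, ((βe (Sum.inr i)) : ℕ) = (i : ℕ) := fun i => by
    simp [hβe]
  set U' : Matrix (Fin m ⊕ Fin n) (Fin m ⊕ Fin n) R := Uf.submatrix σe βe with hU'
  set H' : Matrix (Fin m ⊕ Fin n) (Fin m ⊕ Fin n) R := Hf.submatrix βe σe with hH'
  -- entries of the product
  have hmulapply : ∀ (x y : Fin m ⊕ Fin n),
      (U' * H') x y = ∑ k : Fin (m+n), Uf (σe x) k * μ ((k : ℕ) + ((σe y) : ℕ)) := by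
    intro x y
    rw [Matrix.mul_apply, ← Equiv.sum_comp βe
      (fun k => Uf (σe x) k * μ ((k : ℕ) + ((σe y) : ℕ)))]
    rfl
  have hTop : ∀ (i : Fin m) (y : Fin m ⊕ Fin n),
      (U' * H') (Sum.inl i) y = μ ((n + (i : ℕ)) + ((σe y) : ℕ)) := by
    intro i y
    rw [hmulapply]
    have hUrow : ∀ k : Fin (m+n), Uf (σe (Sum.inl i)) k
        = (if k = (⟨n + (i : ℕ), by omega⟩ : Fin (m+n)) then (1:R) else 0) := by
      intro k
      rw [hUf]
      simp only [Matrix.of_apply, hσl, Fin.is_lt, if_true]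
      have hiff : ((k : ℕ) = n + (i : ℕ)) ↔ (k = (⟨n + (i : ℕ), by omega⟩ : Fin (m+n))) := by
        rw [Fin.ext_iff]
      simp only [hiff]
    simp_rw [hUrow, ite_mul, one_mul, zero_mul]
    rw [Finset.sum_ite_eq' Finset.univ, if_pos (Finset.mem_univ _)]
  have hBot : ∀ (i : Fin n) (y : Fin m ⊕ Fin n),
      (U' * H') (Sum.inr i) y
        = ∑ c ∈ Finset.range (m + (i : ℕ) + 1),
            (-1:R)^((m + (i : ℕ)) + c) * Dm μ 0 (m + (i : ℕ)) c * μ (c + ((σe y) : ℕ)) := by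
    intro i y
    rw [hmulapply]
    have hUrow : ∀ k : Fin (m+n), Uf (σe (Sum.inr i)) k
        = (-1:R)^((m + (i : ℕ)) + (k : ℕ)) * Dm μ 0 (m + (i : ℕ)) (k : ℕ) := by
      intro k
      rw [hUf]
      simp only [Matrix.of_apply, hσr]
      rw [if_neg (by omega)]
    simp_rw [hUrow]
    rw [Fin.sum_univ_eq_sum_range
      (fun k => (-1:R)^((m + (i : ℕ)) + k) * Dm μ 0 (m + (i : ℕ)) k * μ (k + ((σe y) : ℕ)))]
    symm
    apply Finset.sum_subset
    · apply Finset.range_subset_range.mpr; omega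
    · intro x _ hnx
      have hx2 : m + (i : ℕ) < x := by
        simp only [Finset.mem_range, not_lt] at hnx
        omega
      rw [Dm_zero_of_gt μ 0 _ x hx2]
      ring
  -- the product is block-structured
  have h21 : (U' * H').toBlocks₂₁ = 0 := by
    ext i j
    rw [Matrix.toBlocks₂₁]
    simp only [Matrix.of_apply, Matrix.zero_apply]
    rw [hBot i (Sum.inl j), cofactor_lt]
    rw [hσl]; omega
  have h11 : Matrix.det ((U' * H').toBlocks₁₁) = Dm μ n (m+n) (m+n) := by
    have hDm : Dm μ n (m+n) (m+n)
        = Matrix.det (Matrix.of fun r c : Fin ((m+n) - n) => μ (n + (r : ℕ) + (c : ℕ))) := by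
      unfold Dm
      rw [if_pos ⟨by omega, le_refl _⟩]
      congr 1
      ext r c
      have hc : (c : ℕ) < (m+n) - n := c.isLt
      simp only [Matrix.of_apply, hc, if_true]
    rw [hDm, ← Matrix.det_submatrix_equiv_self (finCongr (by omega : m = (m+n) - n))]
    congr 1
    ext i j
    simp only [Matrix.submatrix_apply, Matrix.of_apply, Matrix.toBlocks₁₁, finCongr_apply,
      Fin.coe_cast]
    rw [hTop i (Sum.inl j), hσl, Nat.add_assoc]
  have h22 : Matrix.det ((U' * H').toBlocks₂₂)
      = ∏ i : Fin n, Dm μ 0 (m + (i : ℕ) + 1) (m + (i : ℕ) + 1) := by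
    rw [Matrix.det_of_upperTriangular (M := (U' * H').toBlocks₂₂)]
    · refine Finset.prod_congr rfl fun i _ => ?_
      show (U' * H') (Sum.inr i) (Sum.inr i) = _
      rw [hBot i (Sum.inr i), hσr]
      exact cofactor_eq μ (m + (i : ℕ))
    · intro i j hij
      show (U' * H') (Sum.inr i) (Sum.inr j) = 0
      rw [hBot i (Sum.inr j), hσr]
      exact cofactor_lt μ _ _ (by simp only [Function.id_def, Fin.lt_def] at hij; omega)
  have hProd : Matrix.det (U' * H')
      = Dm μ n (m+n) (m+n) * ∏ i : Fin n, Dm μ 0 (m + (i : ℕ) + 1) (m + (i : ℕ) + 1) := by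
    rw [← Matrix.fromBlocks_toBlocks (U' * H'), h21, Matrix.det_fromBlocks_zero₂₁, h11, h22]
  -- determinant of U'
  have hU11 : (U').toBlocks₁₁ = (1 : Matrix (Fin m) (Fin m) R) := by
    ext i j
    rw [Matrix.toBlocks₁₁]
    simp only [Matrix.of_apply, hU', Matrix.submatrix_apply, hUf]
    rcases eq_or_ne i j with h | h
    · subst h
      simp [hσl, hβl]
    · rw [Matrix.one_apply_ne h]
      simp only [Matrix.of_apply, hσl, hβl, Fin.is_lt, if_true]
      rw [if_neg (by
        intro hc
        exact h (Fin.ext (by omega)).symm)]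
  have hU12 : (U').toBlocks₁₂ = 0 := by
    ext i j
    rw [Matrix.toBlocks₁₂]
    simp only [Matrix.of_apply, hU', Matrix.submatrix_apply, hUf, Matrix.zero_apply]
    simp only [Matrix.of_apply, hσl, hβr, Fin.is_lt, if_true]
    rw [if_neg (by omega)]
  have hdetU : Matrix.det U' = ((-1:R)^m)^n * Matrix.det L := by
    rw [← Matrix.fromBlocks_toBlocks U', hU11, hU12, Matrix.det_fromBlocks_zero₁₂,
      Matrix.det_one, one_mul]
    have hblock : (U').toBlocks₂₂
        = Matrix.of fun i j : Fin n => (-1:R)^(m + (i : ℕ)) *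
            (Matrix.of fun i j : Fin n => (-1:R)^((j : ℕ)) * L i j) i j := by
      ext i j
      rw [Matrix.toBlocks₂₂]
      simp only [Matrix.of_apply, hU', Matrix.submatrix_apply, hUf]
      simp only [Matrix.of_apply, hσr, hβr]
      rw [if_neg (by omega), hL]
      simp only [Matrix.of_apply]
      rw [pow_add]
      ring_nf
    rw [hblock, Matrix.det_mul_column, Matrix.det_mul_row]
    have h1 : (∏ i : Fin n, (-1:R)^(m + (i : ℕ)))
        = ((-1:R)^m)^n * ∏ i : Fin n, (-1:R)^((i : ℕ)) := by
      calc (∏ i : Fin n, (-1:R)^(m + (i : ℕ)))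
          = ∏ i : Fin n, ((-1:R)^m * (-1:R)^((i : ℕ))) :=
            Finset.prod_congr rfl (fun i _ => pow_add (-1:R) m (i : ℕ))
        _ = (∏ _i : Fin n, (-1:R)^m) * ∏ i : Fin n, (-1:R)^((i : ℕ)) :=
            Finset.prod_mul_distrib
        _ = ((-1:R)^m)^n * ∏ i : Fin n, (-1:R)^((i : ℕ)) := by
            rw [Finset.prod_const, Finset.card_univ, Fintype.card_fin]
    have h2 : (∏ i : Fin n, (-1:R)^((i : ℕ))) * (∏ i : Fin n, (-1:R)^((i : ℕ))) = 1 := by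
      rw [← Finset.prod_mul_distrib]
      have : ∀ i : Fin n, (-1:R)^((i : ℕ)) * (-1:R)^((i : ℕ)) = 1 := by
        intro i
        rw [← mul_pow]
        norm_num
      rw [Finset.prod_congr rfl (fun i _ => this i)]
      exact Finset.prod_const_one
    rw [h1]
    calc ((-1:R)^m)^n * (∏ i : Fin n, (-1:R)^((i:ℕ))) *
          ((∏ i : Fin n, (-1:R)^((i:ℕ))) * Matrix.det L)
        = ((-1:R)^m)^n * (((∏ i : Fin n, (-1:R)^((i:ℕ))) * (∏ i : Fin n, (-1:R)^((i:ℕ))))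
            * Matrix.det L) := by ring
      _ = ((-1:R)^m)^n * Matrix.det L := by rw [h2, one_mul]
  -- determinant of H'
  have hβσ : ∀ k : Fin m ⊕ Fin n, βe k = σe k + ((n : ℕ) : Fin (m+n)) := by
    intro k
    have hnv : (((n : ℕ) : Fin (m+n)) : ℕ) = n := by
      rw [Fin.val_natCast, Nat.mod_eq_of_lt (by omega)]
    rcases k with i | i
    · rw [Fin.ext_iff, Fin.val_add, hnv, hβl, hσl, Nat.mod_eq_of_lt (by omega), Nat.add_comm]
    · rw [Fin.ext_iff, Fin.val_add, hnv, hβr, hσr]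
      rw [show m + (i:ℕ) + n = (i:ℕ) + (m+n) from by omega, Nat.add_mod_right,
        Nat.mod_eq_of_lt (by omega)]
  set π : Equiv.Perm (Fin m ⊕ Fin n) := βe.trans σe.symm with hπ
  have hHperm : H' = (Hf.submatrix σe σe).submatrix π id := by
    ext x y
    simp only [hH', Matrix.submatrix_apply, hπ, Equiv.trans_apply, Equiv.apply_symm_apply, id]
  have hπconj : σe.permCongr π = (finRotate (m+n))^n := by
    apply Equiv.ext
    intro x
    rw [finRotate_pow_apply]
    simp only [Equiv.permCongr_apply, hπ, Equiv.trans_apply, Equiv.apply_symm_apply]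
    rw [hβσ, Equiv.apply_symm_apply]
  have hsignπ : Equiv.Perm.sign π = ((-1 : ℤˣ)^(m+n-1))^n := by
    rw [← Equiv.Perm.sign_permCongr σe π, hπconj, map_pow]
    obtain ⟨M, hM⟩ : ∃ M, m + n = M + 1 := ⟨m + n - 1, by omega⟩
    rw [hM]
    rw [sign_finRotate]
  have hdetH : Matrix.det H' = ((-1:R)^(m+n-1))^n * Matrix.det Hf := by
    rw [hHperm]
    have : ((Hf.submatrix σe σe).submatrix π id).det
        = Equiv.Perm.sign π * (Hf.submatrix σe σe).det := Matrix.det_permute π _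
    rw [this, Matrix.det_submatrix_equiv_self, hsignπ]
    push_cast
    norm_num
  -- putting it together
  have hdetHf : Matrix.det Hf = Dm μ 0 (m+n) (m+n) := (Dm_hankel μ (m+n)).symm
  have hmain : (((-1:R)^m)^n * ((-1:R)^(m+n-1))^n) * (Matrix.det L * Dm μ 0 (m+n) (m+n))
      = Dm μ n (m+n) (m+n) * ∏ i : Fin n, Dm μ 0 (m + (i : ℕ) + 1) (m + (i : ℕ) + 1) := by
    rw [← hProd, Matrix.det_mul, hdetU, hdetH, hdetHf]
    ring
  have hsign : (((-1:R)^m)^n * ((-1:R)^(m+n-1))^n) = 1 := by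
    rw [← mul_pow, ← pow_add, ← pow_mul]
    refine Even.neg_one_pow ?_
    rcases Nat.even_or_odd n with h | h
    · exact h.mul_left _
    · obtain ⟨k, hk⟩ := h
      exact Even.mul_right ⟨m + k, by omega⟩ _
  rw [hsign, one_mul] at hmain
  rw [hmain]
  congr 1
  rw [Fin.prod_univ_eq_prod_range (fun i => Dm μ 0 (m + i + 1) (m + i + 1)) n]
  have hshift : ∀ N : ℕ, ∏ i ∈ Finset.range N, Dm μ 0 (m + i + 1) (m + i + 1)
      = ∏ i ∈ Finset.Icc 1 N, Dm μ 0 (m + i) (m + i) := by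
    intro N
    induction N with
    | zero => simp
    | succ k ih =>
      rw [Finset.prod_range_succ, ih, Finset.prod_Icc_succ_top (by omega)]
      rw [show m + (k + 1) = m + k + 1 from by omega]
  exact hshift n

lemma hankel_ne_zero (N : ℕ) :
    Dm (fun k => (MvPolynomial.X k : MvPolynomial ℕ ℤ)) 0 N N ≠ 0 := by
  intro h0
  set v : Fin N → ℤ := fun t => ((t : ℕ) : ℤ) + 1 with hv
  set f : ℕ → ℤ := fun k => ∑ t : Fin N, (v t) ^ k with hf
  have h1 := congrArg (MvPolynomial.eval f) h0
  rw [map_zero, Dm_map (MvPolynomial.eval f)] at h1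
  have h2 : (fun k => MvPolynomial.eval f (MvPolynomial.X k)) = f := by
    funext k
    rw [MvPolynomial.eval_X]
  rw [h2, Dm_hankel] at h1
  have h3 : (Matrix.of fun r c : Fin N => f ((r : ℕ) + (c : ℕ)))
      = (Matrix.vandermonde v)ᵀ * Matrix.vandermonde v := by
    ext r c
    rw [Matrix.vandermonde_transpose_mul_vandermonde]
    simp [hf]
  rw [h3, Matrix.det_mul, Matrix.det_transpose] at h1
  have h4 : Matrix.det (Matrix.vandermonde v) ≠ 0 := by
    rw [Matrix.det_vandermonde]
    apply Finset.prod_ne_zero_iff.mpr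
    intro i _
    apply Finset.prod_ne_zero_iff.mpr
    intro j hj
    have hij : (i : ℕ) < (j : ℕ) := Fin.lt_def.mp (Finset.mem_Ioi.mp hj)
    show (((j : ℕ) : ℤ) + 1) - (((i : ℕ) : ℤ) + 1) ≠ 0
    omega
  exact h4 (by
    rcases mul_eq_zero.mp h1 with h | h
    · exact h
    · exact h)

end CiglerAux

theorem cigler_conjecture_minor_form {R : Type*} [CommRing R] (μ : ℕ → R)
    (m n : ℕ) (hm : 1 ≤ m) (hn : 1 ≤ n) :
    Matrix.det (Matrix.of fun i j : Fin n => Dm μ 0 ((i : ℕ) + m) (j : ℕ)) =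
      Dm μ n (m + n) (m + n) * ∏ i ∈ Finset.Icc 1 (n - 1), Dm μ 0 (m + i) (m + i) := by
  classical
  set Xμ : ℕ → MvPolynomial ℕ ℤ := MvPolynomial.X with hXμ
  have hkey := CiglerAux.key Xμ m n hm hn
  have hsplit : ∏ i ∈ Finset.Icc 1 n, Dm Xμ 0 (m + i) (m + i)
      = (∏ i ∈ Finset.Icc 1 (n-1), Dm Xμ 0 (m + i) (m + i)) * Dm Xμ 0 (m + n) (m + n) := by
    rw [show n = (n - 1) + 1 from by omega, Finset.prod_Icc_succ_top (by omega),
      show (n - 1) + 1 = n from by omega]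
  have hpoly : Matrix.det (Matrix.of fun i j : Fin n => Dm Xμ 0 ((i : ℕ) + m) (j : ℕ))
      = Dm Xμ n (m + n) (m + n) * ∏ i ∈ Finset.Icc 1 (n-1), Dm Xμ 0 (m + i) (m + i) := by
    apply mul_right_cancel₀ (CiglerAux.hankel_ne_zero (m + n))
    rw [hkey, hsplit]
    ring
  set φ : MvPolynomial ℕ ℤ →+* R := MvPolynomial.eval₂Hom (Int.castRingHom R) μ with hφ
  have hφX : (fun k => φ (Xμ k)) = μ := by
    funext k
    simp [hφ, hXμ]
  have h2 := congrArg φ hpoly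
  rw [RingHom.map_det, map_mul, map_prod, RingHom.mapMatrix_apply] at h2
  have hL : (Matrix.of fun i j : Fin n => Dm Xμ 0 ((i : ℕ) + m) (j : ℕ)).map φ
      = Matrix.of fun i j : Fin n => Dm μ 0 ((i : ℕ) + m) (j : ℕ) := by
    ext i j
    rw [Matrix.map_apply, Matrix.of_apply, Matrix.of_apply, CiglerAux.Dm_map, hφX]
  rw [hL] at h2
  simp only [CiglerAux.Dm_map, hφX] at h2
  exact h2
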